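/- Let s ∈ (0, 1], 0 < c ≤ d, and x_j, τ_j (j = 1, …, m) reals with 0 ≤ x₁ < x₂ < ⋯ < x_m ≤ B and c ≤ τ₁ ≤ τ₂ ≤ ⋯ ≤ τ_m ≤ d. Then Σ_{j=1}^{m-1} |x_j/τ_j - x_{j+1}/τ_{j+1}|^{1/s} ≤ 2^{1/s} (B/c)^{1/s}. -/

import Mathlib

private lemma real_add_rpow_le_rpow_add {a b p : ℝ} (ha : 0 ≤ a) (hb : 0 ≤ b)
    (hp : 1 ≤ p) : a ^ p + b ^ p ≤ (a + b) ^ p := by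
  lift a to NNReal using ha
  lift b to NNReal using hb
  exact_mod_cast NNReal.add_rpow_le_rpow_add a b hp

private lemma sum_rpow_le_rpow_sum {ι : Type*} (t : Finset ι) (f : ι → ℝ) {p : ℝ}
    (hp : 1 ≤ p) (hf : ∀ i ∈ t, 0 ≤ f i) :
    ∑ i ∈ t, f i ^ p ≤ (∑ i ∈ t, f i) ^ p := by
  induction t using Finset.cons_induction with
  | empty => simp [Real.zero_rpow (by positivity : p ≠ 0)]
  | cons a t hat ih =>
    simp only [Finset.sum_cons]
    have hfa : 0 ≤ f a := hf a (Finset.mem_cons_self a t)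
    have hft : ∀ i ∈ t, 0 ≤ f i := fun i hi => hf i (Finset.mem_cons_of_mem hi)
    have hsum : 0 ≤ ∑ i ∈ t, f i := Finset.sum_nonneg hft
    calc f a ^ p + ∑ i ∈ t, f i ^ p ≤ f a ^ p + (∑ i ∈ t, f i) ^ p := by
          gcongr; exact ih hft
      _ ≤ (f a + ∑ i ∈ t, f i) ^ p := real_add_rpow_le_rpow_add hfa hsum hp

private lemma fin_telescope {m : ℕ} (f : Fin (m + 1) → ℝ) :
    ∑ j : Fin m, (f j.succ - f j.castSucc) = f (Fin.last m) - f 0 := by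
  induction m with
  | zero => simp
  | succ n ih =>
    rw [Fin.sum_univ_castSucc]
    have h := ih (fun k => f k.castSucc)
    have e : ∀ j : Fin n, f j.castSucc.succ - f j.castSucc.castSucc =
        (fun k : Fin (n + 1) => f k.castSucc) j.succ -
          (fun k : Fin (n + 1) => f k.castSucc) j.castSucc := by
      intro j
      simp [Fin.succ_castSucc, -Fin.castSucc_succ]
    rw [Finset.sum_congr rfl (fun j _ => e j), h]
    have hl : (Fin.last n).succ = Fin.last (n + 1) := rfl
    rw [hl, show (Fin.castSucc (0 : Fin (n + 1))) = (0 : Fin (n + 2)) from rfl]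
    ring

/-- The key spatial computation: if `0 ≤ x₁ < ⋯ < x_m ≤ B` and
`c ≤ τ₁ ≤ ⋯ ≤ τ_m ≤ d` with `0 < c ≤ d`, then for `s ∈ (0,1]`,
`Σ |x_j/τ_j - x_{j+1}/τ_{j+1}|^(1/s) ≤ 2^(1/s) (B/c)^(1/s)`. -/
theorem spatial_sum_estimate
    (s : ℝ) (hs0 : 0 < s) (hs1 : s ≤ 1)
    (c d B : ℝ) (hc : 0 < c) (hcd : c ≤ d)
    (m : ℕ) (x τ : Fin (m + 1) → ℝ)
    (hx_mono : StrictMono x) (hx0 : 0 ≤ x 0) (hxB : x (Fin.last m) ≤ B)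
    (hτ_mono : Monotone τ) (hτc : c ≤ τ 0) (hτd : τ (Fin.last m) ≤ d) :
    ∑ j : Fin m, |x j.castSucc / τ j.castSucc - x j.succ / τ j.succ| ^ (1 / s) ≤
      2 ^ (1 / s) * (B / c) ^ (1 / s) := by
  set p : ℝ := 1 / s with hp_def
  have hp1 : 1 ≤ p := by
    rw [hp_def, le_div_iff₀ hs0]; linarith
  -- basic facts
  have hx_nonneg : ∀ j : Fin (m + 1), 0 ≤ x j := fun j =>
    hx0.trans (hx_mono.monotone (Fin.zero_le j))
  have hτ_pos : ∀ j : Fin (m + 1), 0 < τ j := fun j =>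
    lt_of_lt_of_le hc (hτc.trans (hτ_mono (Fin.zero_le j)))
  have hxB' : ∀ j : Fin (m + 1), x j ≤ B := fun j =>
    (hx_mono.monotone (Fin.le_last j)).trans hxB
  have hB : 0 ≤ B := (hx_nonneg 0).trans (hxB' 0)
  -- the dominating terms
  set u : Fin m → ℝ := fun j =>
    (x j.succ - x j.castSucc) / c + B * (1 / τ j.castSucc - 1 / τ j.succ) with hu_def
  have hx_step : ∀ j : Fin m, x j.castSucc ≤ x j.succ := fun j =>
    (hx_mono (Fin.castSucc_lt_succ (i := j))).le
  have hτ_step : ∀ j : Fin m, τ j.castSucc ≤ τ j.succ := fun j =>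
    hτ_mono (Fin.castSucc_lt_succ (i := j)).le
  have hu_nonneg : ∀ j : Fin m, 0 ≤ u j := by
    intro j
    have h1 : 0 ≤ (x j.succ - x j.castSucc) / c :=
      div_nonneg (by linarith [hx_step j]) hc.le
    have h2 : 1 / τ j.succ ≤ 1 / τ j.castSucc :=
      one_div_le_one_div_of_le (hτ_pos _) (hτ_step j)
    have h3 : 0 ≤ B * (1 / τ j.castSucc - 1 / τ j.succ) :=
      mul_nonneg hB (by linarith)
    rw [hu_def]; dsimp only; linarith
  -- each term is dominated
  have habs : ∀ j : Fin m,
      |x j.castSucc / τ j.castSucc - x j.succ / τ j.succ| ≤ u j := by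
    intro j
    have hτc' : 0 < τ j.castSucc := hτ_pos _
    have hτs' : 0 < τ j.succ := hτ_pos _
    have key : x j.succ / τ j.succ - x j.castSucc / τ j.castSucc =
        (x j.succ - x j.castSucc) / τ j.succ -
          x j.castSucc * (1 / τ j.castSucc - 1 / τ j.succ) := by
      field_simp
      ring
    rw [abs_sub_comm, abs_le]
    constructor
    · rw [key]
      have h1 : (x j.succ - x j.castSucc) / τ j.succ ≥ 0 :=
        div_nonneg (by linarith [hx_step j]) hτs'.le
      have h2 : x j.castSucc * (1 / τ j.castSucc - 1 / τ j.succ) ≤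
          B * (1 / τ j.castSucc - 1 / τ j.succ) := by
        have : 1 / τ j.succ ≤ 1 / τ j.castSucc :=
          one_div_le_one_div_of_le hτc' (hτ_step j)
        exact mul_le_mul_of_nonneg_right (hxB' _) (by linarith)
      rw [hu_def]; dsimp only
      have h3 : 0 ≤ (x j.succ - x j.castSucc) / c :=
        div_nonneg (by linarith [hx_step j]) hc.le
      linarith
    · rw [key]
      have h1 : (x j.succ - x j.castSucc) / τ j.succ ≤
          (x j.succ - x j.castSucc) / c :=
        div_le_div_of_nonneg_left (by linarith [hx_step j]) hc
          (hτc.trans (hτ_mono (Fin.zero_le _)))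
      have h2 : 0 ≤ x j.castSucc * (1 / τ j.castSucc - 1 / τ j.succ) := by
        have : 1 / τ j.succ ≤ 1 / τ j.castSucc :=
          one_div_le_one_div_of_le hτc' (hτ_step j)
        exact mul_nonneg (hx_nonneg _) (by linarith)
      have h3 : 0 ≤ B * (1 / τ j.castSucc - 1 / τ j.succ) := by
        have : 1 / τ j.succ ≤ 1 / τ j.castSucc :=
          one_div_le_one_div_of_le hτc' (hτ_step j)
        exact mul_nonneg hB (by linarith)
      rw [hu_def]; dsimp only
      linarith
  -- telescoping: sum of u is at most 2 * (B/c)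
  have tel : ∀ f : Fin (m + 1) → ℝ,
      ∑ j : Fin m, (f j.succ - f j.castSucc) = f (Fin.last m) - f 0 :=
    fin_telescope
  have hsum_u : ∑ j : Fin m, u j ≤ 2 * (B / c) := by
    have e : ∑ j : Fin m, u j =
        (x (Fin.last m) - x 0) / c + B * (1 / τ 0 - 1 / τ (Fin.last m)) := by
      rw [hu_def]
      rw [Finset.sum_add_distrib, ← Finset.sum_div, tel x, ← Finset.mul_sum]
      congr 1
      have : ∑ j : Fin m, (1 / τ j.castSucc - 1 / τ j.succ) =
          -∑ j : Fin m, ((fun k => 1 / τ k) j.succ - (fun k => 1 / τ k) j.castSucc) := by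
        rw [← Finset.sum_neg_distrib]
        exact Finset.sum_congr rfl (fun j _ => by ring)
      rw [this, tel (fun k => 1 / τ k)]
      ring
    rw [e]
    have h1 : (x (Fin.last m) - x 0) / c ≤ B / c :=
      by gcongr <;> linarith
    have h2 : B * (1 / τ 0 - 1 / τ (Fin.last m)) ≤ B / c := by
      have ha : 1 / τ 0 ≤ 1 / c := one_div_le_one_div_of_le hc hτc
      have hτl := hτ_pos (Fin.last m)
      have hb : 0 < 1 / τ (Fin.last m) := by positivity
      calc B * (1 / τ 0 - 1 / τ (Fin.last m)) ≤ B * (1 / c) :=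
            mul_le_mul_of_nonneg_left (by linarith) hB
        _ = B / c := by ring
    linarith
  -- final assembly
  have hBc : 0 ≤ B / c := div_nonneg hB hc.le
  calc ∑ j : Fin m, |x j.castSucc / τ j.castSucc - x j.succ / τ j.succ| ^ p
      ≤ ∑ j : Fin m, u j ^ p := by
        apply Finset.sum_le_sum
        intro j _
        exact Real.rpow_le_rpow (abs_nonneg _) (habs j) (by linarith)
    _ ≤ (∑ j : Fin m, u j) ^ p := sum_rpow_le_rpow_sum _ _ hp1 (fun j _ => hu_nonneg j)
    _ ≤ (2 * (B / c)) ^ p :=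
        Real.rpow_le_rpow (Finset.sum_nonneg fun j _ => hu_nonneg j) hsum_u (by linarith)
    _ = 2 ^ p * (B / c) ^ p := Real.mul_rpow (by norm_num) hBc
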